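/- Fix a full-support probability distribution p° on {-1,1}^n. A deterministic voting rule φ is strictly efficient under p° (no random voting rule φ̄ ≠ φ is weakly Pareto-preferred to φ, i.e., there is no φ̄ with E_{p°}[φ̄(x)xᵢ] ≥ E_{p°}[φ(x)xᵢ] for all i with φ̄ ≠ φ as a rule) if and only if there exists w ∈ ℝ₊^n, w ≠ 0, with φ(x)·∑ᵢ wᵢxᵢ > 0 for all x ∈ {-1,1}^n. -/

import Mathlib

open Finset

/-- The real value of a ±1 vote encoded as a `Bool` (`true ↦ 1`, `false ↦ -1`). -/
def sg (b : Bool) : ℝ := if b then 1 else -1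


lemma sg_ne_zero (b : Bool) : sg b ≠ 0 := by cases b <;> norm_num [sg]

noncomputable def Tmap (n : ℕ) (φ : (Fin n → Bool) → Bool) :
    ((Fin n → Bool) → ℝ) →ₗ[ℝ] (Fin n → ℝ) where
  toFun q := ∑ x : Fin n → Bool, q x • (fun i => sg (φ x) * sg (x i))
  map_add' a b := by simp [add_smul, Finset.sum_add_distrib]
  map_smul' c a := by simp [Finset.smul_sum, smul_smul, mul_assoc]

lemma Tmap_apply (n : ℕ) (φ : (Fin n → Bool) → Bool) (q : (Fin n → Bool) → ℝ) (i : Fin n) :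
    Tmap n φ q i = ∑ x : Fin n → Bool, q x * (sg (φ x) * sg (x i)) := by
  simp [Tmap, Finset.sum_apply]

lemma fwd (n : ℕ) (φ : (Fin n → Bool) → Bool) (p : (Fin n → Bool) → ℝ)
    (hfull : ∀ x, 0 < p x)
    (hne : ¬∃ φb : (Fin n → Bool) → ℝ,
        (∀ x, φb x ∈ Set.Icc (-1 : ℝ) 1) ∧ φb ≠ (fun x => sg (φ x)) ∧
        ∀ i, (∑ x : Fin n → Bool, p x * (sg (φ x) * sg (x i))) ≤
             ∑ x : Fin n → Bool, p x * (φb x * sg (x i))) :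
    ∃ w : Fin n → ℝ, (∀ i, 0 ≤ w i) ∧ w ≠ 0 ∧
        ∀ x, 0 < sg (φ x) * ∑ i, w i * sg (x i) := by
  classical
  set K : Set (Fin n → ℝ) := Tmap n φ '' stdSimplex ℝ (Fin n → Bool) with hKdef
  set O : Set (Fin n → ℝ) := {y | ∀ i, y i ≤ 0} with hOdef
  have hKconv : Convex ℝ K := (convex_stdSimplex ℝ _).linear_image (Tmap n φ)
  have hKcomp : IsCompact K :=
    (isCompact_stdSimplex _ _).image (Tmap n φ).continuous_of_finiteDimensional
  have hOconv : Convex ℝ O := by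
    intro a ha b hb s t hs ht hst i
    have h1 := ha i
    have h2 := hb i
    simp only [Pi.add_apply, Pi.smul_apply, smul_eq_mul]
    nlinarith
  have hOclosed : IsClosed O := by
    have : O = ⋂ i, {y : Fin n → ℝ | y i ≤ 0} := by ext y; simp [hOdef, Set.mem_iInter]
    rw [this]
    exact isClosed_iInter fun i => isClosed_le (continuous_apply i) continuous_const
  -- the compact convex set and the orthant are disjoint, else we could improve on φ
  have hdisj : Disjoint K O := by
    rw [Set.disjoint_left]
    rintro a ⟨q, hq, rfl⟩ hmem
    have hq0 : ∀ x, 0 ≤ q x := hq.1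
    have hq1 : ∑ x : Fin n → Bool, q x = 1 := hq.2
    have hOi : ∀ i, ∑ x : Fin n → Bool, q x * (sg (φ x) * sg (x i)) ≤ 0 := by
      intro i
      have h := hmem i
      rwa [Tmap_apply] at h
    set m := Finset.univ.inf' Finset.univ_nonempty p with hm
    have hm0 : 0 < m := (Finset.lt_inf'_iff _).2 fun x _ => hfull x
    have hmle : ∀ x, m ≤ p x := fun x => Finset.inf'_le _ (Finset.mem_univ x)
    have hqle1 : ∀ x, q x ≤ 1 := by
      intro x
      rw [← hq1]
      exact Finset.single_le_sum (fun y _ => hq0 y) (Finset.mem_univ x)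
    apply hne
    refine ⟨fun x => sg (φ x) * (1 - 2 * m * q x / p x), fun x => ?_, ?_, fun i => ?_⟩
    · have hpx := hfull x
      have hs0 : 0 ≤ 2 * m * q x / p x :=
        div_nonneg (mul_nonneg (mul_nonneg (by norm_num) hm0.le) (hq0 x)) hpx.le
      have hs2 : 2 * m * q x / p x ≤ 2 := by
        rw [div_le_iff₀ hpx]
        nlinarith [hqle1 x, hmle x, hq0 x]
      rw [Set.mem_Icc]
      dsimp only
      rcases Bool.dichotomy (φ x) with hc | hc <;> rw [hc] <;> norm_num [sg] <;>
        constructor <;> linarith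
    · obtain ⟨x0, hx0⟩ : ∃ x, q x ≠ 0 := by
        by_contra h
        push_neg at h
        rw [Finset.sum_eq_zero (fun x _ => h x)] at hq1
        norm_num at hq1
      intro heq
      have h1 := congrFun heq x0
      have h2 : (1 : ℝ) - 2 * m * q x0 / p x0 = 1 :=
        mul_left_cancel₀ (sg_ne_zero (φ x0)) (h1.trans (mul_one (sg (φ x0))).symm)
      have h3 : 2 * m * q x0 / p x0 = 0 := by linarith
      rw [div_eq_zero_iff] at h3
      rcases h3 with h | h
      · have hq0' : 0 < q x0 := lt_of_le_of_ne (hq0 x0) (Ne.symm hx0)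
        nlinarith [mul_pos hm0 hq0']
      · exact absurd h (ne_of_gt (hfull x0))
    · have hsum : ∑ x : Fin n → Bool,
          p x * (sg (φ x) * (1 - 2 * m * q x / p x) * sg (x i))
          = (∑ x : Fin n → Bool, p x * (sg (φ x) * sg (x i)))
            - 2 * m * ∑ x : Fin n → Bool, q x * (sg (φ x) * sg (x i)) := by
        rw [Finset.mul_sum, ← Finset.sum_sub_distrib]
        refine Finset.sum_congr rfl fun x _ => ?_
        have hpx := (hfull x).ne'
        field_simp
      rw [hsum]
      have h0 := hOi i
      have h2 : 2 * m * ∑ x : Fin n → Bool, q x * (sg (φ x) * sg (x i)) ≤ 0 :=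
        mul_nonpos_of_nonneg_of_nonpos (by linarith) h0
      linarith
  obtain ⟨f, u, c, hfu, huc, hcf⟩ :=
    geometric_hahn_banach_compact_closed hKconv hKcomp hOconv hOclosed hdisj
  have hc0 : c < 0 := by
    have h0 : (0 : Fin n → ℝ) ∈ O := fun i => le_refl 0
    have := hcf 0 h0
    rwa [map_zero] at this
  have hrep : ∀ y : Fin n → ℝ, f y = ∑ i, y i * f (fun j => if i = j then 1 else 0) := by
    intro y
    simpa [smul_eq_mul] using
      LinearMap.pi_apply_eq_sum_univ (f : (Fin n → ℝ) →ₗ[ℝ] ℝ) y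
  set w : Fin n → ℝ := fun i => -f (fun j => if i = j then 1 else 0) with hw
  have hw0 : ∀ i, 0 ≤ w i := by
    intro i
    by_contra hneg
    push_neg at hneg
    have hpos : 0 < f (fun j => if i = j then 1 else 0) := by
      have : w i < 0 := hneg
      simp only [hw] at this
      linarith
    set t : ℝ := -c / f (fun j => if i = j then 1 else 0) with ht
    have ht0 : 0 < t := div_pos (by linarith) hpos
    have hbO : (fun j => if i = j then -t else (0:ℝ)) ∈ O := by
      intro j
      dsimp only
      split
      · linarith
      · exact le_refl 0
    have hbeq : (fun j => if i = j then -t else (0:ℝ))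
        = (-t) • (fun j => if i = j then (1:ℝ) else 0) := by
      funext j
      simp [mul_ite]
    have hfb : f (fun j => if i = j then -t else (0:ℝ)) = c := by
      rw [hbeq, map_smul, smul_eq_mul, ht]
      field_simp
    have := hcf _ hbO
    rw [hfb] at this
    exact lt_irrefl c this
  have key : ∀ x, 0 < sg (φ x) * ∑ i, w i * sg (x i) := by
    intro x
    have hmemK : (fun i => sg (φ x) * sg (x i)) ∈ K := by
      refine ⟨fun y => if y = x then 1 else 0, ⟨fun y => by by_cases h : y = x <;> simp [h], by simp⟩, ?_⟩
      funext i
      rw [Tmap_apply]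
      simp [ite_mul, Finset.sum_ite_eq']
    have hfx : f (fun i => sg (φ x) * sg (x i)) < u := hfu _ hmemK
    have hcalc : sg (φ x) * ∑ i, w i * sg (x i)
        = -f (fun i => sg (φ x) * sg (x i)) := by
      rw [hrep (fun i => sg (φ x) * sg (x i)), Finset.mul_sum, ← Finset.sum_neg_distrib]
      refine Finset.sum_congr rfl fun i _ => ?_
      simp only [hw]
      ring
    rw [hcalc]
    linarith
  refine ⟨w, hw0, ?_, key⟩
  intro h
  have hx := key (fun _ => true)
  rw [h] at hx
  simp at hx

/-- Backward direction: a strict WMR is strictly efficient. -/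
lemma bwd (n : ℕ) (φ : (Fin n → Bool) → Bool) (p : (Fin n → Bool) → ℝ)
    (hfull : ∀ x, 0 < p x) (w : Fin n → ℝ) (hw0 : ∀ i, 0 ≤ w i)
    (hwx : ∀ x, 0 < sg (φ x) * ∑ i, w i * sg (x i)) :
    ¬∃ φb : (Fin n → Bool) → ℝ,
        (∀ x, φb x ∈ Set.Icc (-1 : ℝ) 1) ∧ φb ≠ (fun x => sg (φ x)) ∧
        ∀ i, (∑ x : Fin n → Bool, p x * (sg (φ x) * sg (x i))) ≤
             ∑ x : Fin n → Bool, p x * (φb x * sg (x i)) := by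
  rintro ⟨φb, hIcc, hne, hresp⟩
  set S : (Fin n → Bool) → ℝ := fun x => ∑ i, w i * sg (x i) with hS
  -- the aggregated improvement is nonnegative
  have hsum : 0 ≤ ∑ x : Fin n → Bool, p x * (φb x - sg (φ x)) * S x := by
    have key : ∑ x : Fin n → Bool, p x * (φb x - sg (φ x)) * S x
        = ∑ i, w i * ((∑ x : Fin n → Bool, p x * (φb x * sg (x i)))
            - ∑ x : Fin n → Bool, p x * (sg (φ x) * sg (x i))) := by
      have : ∀ x : Fin n → Bool, p x * (φb x - sg (φ x)) * S x
          = ∑ i, w i * (p x * (φb x * sg (x i)) - p x * (sg (φ x) * sg (x i))) := by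
        intro x
        rw [hS]
        simp only [Finset.mul_sum]
        exact Finset.sum_congr rfl fun i _ => by ring
      rw [Finset.sum_congr rfl fun x _ => this x, Finset.sum_comm]
      refine Finset.sum_congr rfl fun i _ => ?_
      rw [← Finset.mul_sum, Finset.sum_sub_distrib]
    rw [key]
    apply Finset.sum_nonneg
    intro i _
    exact mul_nonneg (hw0 i) (sub_nonneg.2 (hresp i))
  -- each term is nonpositive
  have hterm : ∀ x : Fin n → Bool, p x * (φb x - sg (φ x)) * S x ≤ 0 := by
    intro x
    have h1 := (hIcc x).1
    have h2 := (hIcc x).2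
    have h3 : 0 < sg (φ x) * S x := hwx x
    have h4 := hfull x
    cases hφ : φ x <;> rw [hφ] at h3 <;> norm_num [sg] at h3 ⊢
    · nlinarith [mul_nonneg (mul_nonneg h4.le (by linarith : (0:ℝ) ≤ φb x + 1)) (by linarith : (0:ℝ) ≤ -S x)]
    · nlinarith [mul_nonneg (mul_nonneg h4.le (by linarith : (0:ℝ) ≤ 1 - φb x)) h3.le]
  have hzero : ∀ x : Fin n → Bool, p x * (φb x - sg (φ x)) * S x = 0 := by
    have hle : ∑ x : Fin n → Bool, p x * (φb x - sg (φ x)) * S x ≤ 0 :=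
      Finset.sum_nonpos fun x _ => hterm x
    have := (Finset.sum_eq_zero_iff_of_nonpos fun x _ => hterm x).1 (le_antisymm hle hsum)
    exact fun x => this x (Finset.mem_univ x)
  apply hne
  funext x
  have hx := hzero x
  have hSne : S x ≠ 0 := by
    intro h
    have h0 : (0:ℝ) < sg (φ x) * S x := hwx x
    rw [h, mul_zero] at h0
    exact lt_irrefl 0 h0
  have hpne : p x ≠ 0 := ne_of_gt (hfull x)
  rcases mul_eq_zero.1 hx with h | h
  · rcases mul_eq_zero.1 h with h' | h'
    · exact absurd h' hpne
    · linarith [sub_eq_zero.1 h']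
  · exact absurd h hSne

/-- Responsiveness of individual `i` under rule `φ` and distribution `p`. -/
def resp {n : ℕ} (φ : (Fin n → Bool) → Bool) (p : (Fin n → Bool) → ℝ) (i : Fin n) : ℝ :=
  ∑ x : Fin n → Bool, if φ x = x i then p x else 0

/-- `p` is a probability distribution on profiles. -/
def IsProb {n : ℕ} (p : (Fin n → Bool) → ℝ) : Prop :=
  (∀ x, 0 ≤ p x) ∧ ∑ x : Fin n → Bool, p x = 1

/-- for a full-support `p°`, a deterministic rule `φ` is strictly efficient
under `p°` (no random rule distinct from `φ` is weakly Pareto-preferred to it) iff `φ` is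
a WMR with nonnegative weights and no ties. -/
theorem stmt_19 (n : ℕ) (φ : (Fin n → Bool) → Bool) (p : (Fin n → Bool) → ℝ)
    (hp : IsProb p) (hfull : ∀ x, 0 < p x) :
    (¬∃ φb : (Fin n → Bool) → ℝ,
        (∀ x, φb x ∈ Set.Icc (-1 : ℝ) 1) ∧ φb ≠ (fun x => sg (φ x)) ∧
        ∀ i, (∑ x : Fin n → Bool, p x * (sg (φ x) * sg (x i))) ≤
             ∑ x : Fin n → Bool, p x * (φb x * sg (x i))) ↔
    (∃ w : Fin n → ℝ, (∀ i, 0 ≤ w i) ∧ w ≠ 0 ∧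
        ∀ x, 0 < sg (φ x) * ∑ i, w i * sg (x i)) := by
  constructor
  · exact fwd n φ p hfull
  · rintro ⟨w, hw0, _, hwx⟩
    exact bwd n φ p hfull w hw0 hwx
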